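/- Under the hypotheses of the general Laplace-type expansion (f(ρ,Ω) = ρ^ν Σ_{j=0}^{N} f_j(Ω)ρ^j + o(ρ^{N+ν}) with f₀ > 0 continuous, g(ρ,Ω) = ρ^{λ−d} Σ_{j=0}^{N} g_j(Ω)ρ^j + o(ρ^{N+λ−d}), f attaining unique minimum 0 at 0 and otherwise bounded away from 0, and ∫_R e^{−k₀f} g dx convergent for some k₀ > 0), the leading coefficient in the expansion ∫_R e^{−kf} g dx = ζ₀ k^{−λ/ν} + o(k^{−λ/ν}) is ζ₀ = (1/ν) Γ(λ/ν) ∫_{S^{d−1}} g₀(Ω) f₀(Ω)^{−λ/ν} dΩ. -/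

import Mathlib

open Asymptotics Filter MeasureTheory Set Metric Real Topology

section AuxLemmas

lemma aux_integrable_rpow_exp {p s b : ℝ} (hp : 0 < p) (hs : -1 < s) (hb : 0 < b) :
    IntegrableOn (fun x : ℝ => x ^ s * Real.exp (-b * x ^ p)) (Ioi 0) := by
  have key : IntegrableOn (fun y : ℝ => y ^ ((s + 1) / p - 1) * Real.exp (-b * y)) (Ioi 0) := by
    have := integrableOn_rpow_mul_exp_neg_mul_rpow
      (s := (s + 1) / p - 1) (p := 1) (by
        have : 0 < (s + 1) / p := div_pos (by linarith) hp
        linarith) zero_lt_one hb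
    simpa [Real.rpow_one] using this
  have h := (integrableOn_Ioi_comp_rpow_iff'
    (fun y : ℝ => y ^ ((s + 1) / p - 1) * Real.exp (-b * y)) (ne_of_gt hp)).mpr key
  refine h.congr_fun (fun x hx => ?_) measurableSet_Ioi
  have hx0 : (0 : ℝ) < x := hx
  beta_reduce
  rw [smul_eq_mul, ← Real.rpow_mul hx0.le, ← mul_assoc, ← Real.rpow_add hx0]
  congr 2
  field_simp
  ring

lemma aux_integral_volumeIoiPow (n : ℕ) (h : ℝ → ℝ) :
    ∫ y : Ioi (0:ℝ), h ↑y ∂(Measure.volumeIoiPow n) = ∫ r in Ioi (0:ℝ), r ^ n * h r := by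
  rw [Measure.volumeIoiPow]
  simp only [ENNReal.ofReal]
  rw [integral_withDensity_eq_integral_smul ((measurable_subtype_coe.pow_const _).real_toNNReal),
    integral_subtype_comap measurableSet_Ioi fun a : ℝ => Real.toNNReal (a ^ n) • h a]
  refine setIntegral_congr_fun measurableSet_Ioi fun x hx => ?_
  rw [NNReal.smul_def, Real.coe_toNNReal _ (pow_nonneg hx.out.le _), smul_eq_mul]

variable {d : ℕ}

lemma aux_nontrivial (hd : 0 < d) : Nontrivial (EuclideanSpace ℝ (Fin d)) := by
  have : 0 < Module.finrank ℝ (EuclideanSpace ℝ (Fin d)) := by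
    simpa [finrank_euclideanSpace_fin] using hd
  exact Module.nontrivial_of_finrank_pos this

lemma aux_polar_eq (hd : 0 < d) (F : EuclideanSpace ℝ (Fin d) → ℝ) :
    ∫ x, F x = ∫ p : Metric.sphere (0 : EuclideanSpace ℝ (Fin d)) 1 × Ioi (0:ℝ),
      F ((p.2 : ℝ) • (p.1 : EuclideanSpace ℝ (Fin d)))
      ∂((volume : Measure (EuclideanSpace ℝ (Fin d))).toSphere.prod
          (Measure.volumeIoiPow (d - 1))) := by
  haveI := aux_nontrivial hd
  have hfr : Module.finrank ℝ (EuclideanSpace ℝ (Fin d)) = d := finrank_euclideanSpace_fin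
  have h1 : ∫ x, F x ∂(volume : Measure (EuclideanSpace ℝ (Fin d)))
      = ∫ x : ({0}ᶜ : Set (EuclideanSpace ℝ (Fin d))), F x.1
          ∂((volume : Measure (EuclideanSpace ℝ (Fin d))).comap Subtype.val) := by
    rw [integral_subtype_comap (measurableSet_singleton (0:EuclideanSpace ℝ (Fin d))).compl F,
      restrict_compl_singleton]
  have h2 := (volume : Measure (EuclideanSpace ℝ (Fin d))).measurePreserving_homeomorphUnitSphereProd.integral_comp
    (Homeomorph.measurableEmbedding _)
    (fun p : Metric.sphere (0 : EuclideanSpace ℝ (Fin d)) 1 × Ioi (0:ℝ) =>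
      F ((p.2 : ℝ) • (p.1 : EuclideanSpace ℝ (Fin d))))
  rw [hfr] at h2
  rw [h1, ← h2]
  refine integral_congr_ae (Eventually.of_forall fun x => ?_)
  have hx : (x : EuclideanSpace ℝ (Fin d)) ≠ 0 := x.2
  simp [homeomorphUnitSphereProd, smul_inv_smul₀ (norm_ne_zero_iff.2 hx)]

lemma aux_polar_integrable (hd : 0 < d) (F : EuclideanSpace ℝ (Fin d) → ℝ)
    (hF : Integrable F (volume : Measure (EuclideanSpace ℝ (Fin d)))) :
    Integrable (fun p : Metric.sphere (0 : EuclideanSpace ℝ (Fin d)) 1 × Ioi (0:ℝ) =>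
        F ((p.2 : ℝ) • (p.1 : EuclideanSpace ℝ (Fin d))))
      ((volume : Measure (EuclideanSpace ℝ (Fin d))).toSphere.prod
          (Measure.volumeIoiPow (d - 1))) := by
  haveI := aux_nontrivial hd
  have hfr : Module.finrank ℝ (EuclideanSpace ℝ (Fin d)) = d := finrank_euclideanSpace_fin
  have hmp := (volume : Measure (EuclideanSpace ℝ (Fin d))).measurePreserving_homeomorphUnitSphereProd.integrable_comp_emb
    (Homeomorph.measurableEmbedding _)
    (g := fun p : Metric.sphere (0 : EuclideanSpace ℝ (Fin d)) 1 × Ioi (0:ℝ) =>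
      F ((p.2 : ℝ) • (p.1 : EuclideanSpace ℝ (Fin d))))
  rw [hfr] at hmp
  rw [← hmp]
  have heq : ((fun p : Metric.sphere (0 : EuclideanSpace ℝ (Fin d)) 1 × Ioi (0:ℝ) =>
      F ((p.2 : ℝ) • (p.1 : EuclideanSpace ℝ (Fin d)))) ∘
      (homeomorphUnitSphereProd (EuclideanSpace ℝ (Fin d))))
      = fun x : ({0}ᶜ : Set (EuclideanSpace ℝ (Fin d))) => F x.1 := by
    funext x
    have hx : (x : EuclideanSpace ℝ (Fin d)) ≠ 0 := x.2
    simp [homeomorphUnitSphereProd, smul_inv_smul₀ (norm_ne_zero_iff.2 hx)]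
  rw [heq]
  have h3 := (MeasurableEmbedding.subtype_coe
      (measurableSet_singleton (0:EuclideanSpace ℝ (Fin d))).compl).integrableOn_iff_comap
    (f := F) (μ := (volume : Measure (EuclideanSpace ℝ (Fin d))))
    (s := ({0}ᶜ : Set (EuclideanSpace ℝ (Fin d)))) (by rw [Subtype.range_coe])
  rw [Subtype.coe_preimage_self] at h3
  have h4 : IntegrableOn F ({0}ᶜ : Set (EuclideanSpace ℝ (Fin d)))
      (volume : Measure (EuclideanSpace ℝ (Fin d))) := hF.integrableOn
  rw [h3] at h4
  exact integrableOn_univ.mp h4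

end AuxLemmas

set_option maxHeartbeats 1000000 in
/-- leading coefficient of the general Laplace-type expansion:
under the hypotheses of the general expansion (radial asymptotics of f and g,
f₀ > 0 continuous, unique minimum, integrability), the leading coefficient of
∫_R e^{-kf} g dx ∼ ζ₀ k^{-λ/ν} is ζ₀ = (1/ν)Γ(λ/ν)∫_{S^{d-1}} g₀(Ω) f₀(Ω)^{-λ/ν} dΩ. -/
theorem laplace_type_leading_coefficient (d : ℕ) (hd : 0 < d)
    (R : Set (EuclideanSpace ℝ (Fin d))) (hR : MeasurableSet R) (h0 : 0 ∈ interior R)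
    (f g : EuclideanSpace ℝ (Fin d) → ℝ) (hfm : Measurable f) (hgm : Measurable g)
    (ν lam : ℝ) (hν : 0 < ν) (hlam : 0 < lam)
    (f₀ g₀ : Metric.sphere (0 : EuclideanSpace ℝ (Fin d)) 1 → ℝ)
    (hf₀c : Continuous f₀) (hf₀pos : ∀ Ω, 0 < f₀ Ω)
    (hg₀ : Integrable g₀ ((volume : Measure (EuclideanSpace ℝ (Fin d))).toSphere))
    (hfexp : ∀ ε > 0, ∃ δ > 0, ∀ ρ : ℝ, 0 < ρ → ρ < δ →
      ∀ Ω : Metric.sphere (0 : EuclideanSpace ℝ (Fin d)) 1,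
        |f (ρ • (Ω : EuclideanSpace ℝ (Fin d))) - ρ ^ ν * f₀ Ω| ≤ ε * ρ ^ ν)
    (hgexp : ∀ ε > 0, ∃ δ > 0, ∀ ρ : ℝ, 0 < ρ → ρ < δ →
      ∀ Ω : Metric.sphere (0 : EuclideanSpace ℝ (Fin d)) 1,
        |g (ρ • (Ω : EuclideanSpace ℝ (Fin d))) - ρ ^ (lam - d) * g₀ Ω| ≤ ε * ρ ^ (lam - d))
    (hmin : f 0 = 0) (hpos : ∀ x ∈ R, x ≠ 0 → 0 < f x)
    (hbdd : ∀ δ > 0, ∃ c > 0, ∀ x ∈ R, δ ≤ ‖x‖ → c ≤ f x)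
    (k₀ : ℝ) (hk₀ : 0 < k₀)
    (hint : IntegrableOn (fun x => Real.exp (-k₀ * f x) * g x) R) :
    (fun k : ℝ => (∫ x in R, Real.exp (-k * f x) * g x) -
        ((1 / ν) * Real.Gamma (lam / ν) *
            ∫ Ω, g₀ Ω * (f₀ Ω) ^ (-(lam / ν))
              ∂((volume : Measure (EuclideanSpace ℝ (Fin d))).toSphere)) *
          k ^ (-(lam / ν)))
      =o[atTop] fun k : ℝ => k ^ (-(lam / ν)) := by
  classical
  set μS := (volume : Measure (EuclideanSpace ℝ (Fin d))).toSphere with hμSdef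
  set Z : ℝ := (1 / ν) * Real.Gamma (lam / ν) * ∫ Ω, g₀ Ω * (f₀ Ω) ^ (-(lam / ν)) ∂μS with hZdef
  -- reduction to a limit statement
  suffices main : Tendsto (fun k : ℝ => k ^ (lam / ν) * ∫ x in R, Real.exp (-k * f x) * g x)
      atTop (𝓝 Z) by
    have hside : ∀ᶠ k : ℝ in atTop, k ^ (-(lam / ν)) = 0 →
        (∫ x in R, Real.exp (-k * f x) * g x) - Z * k ^ (-(lam / ν)) = 0 := by
      filter_upwards [eventually_gt_atTop (0:ℝ)] with k hk h
      exact absurd h (Real.rpow_pos_of_pos hk _).ne'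
    rw [isLittleO_iff_tendsto' hside]
    have h1 : Tendsto (fun k : ℝ => k ^ (lam / ν) * (∫ x in R, Real.exp (-k * f x) * g x) - Z)
        atTop (𝓝 0) := by simpa using main.sub_const Z
    refine h1.congr' ?_
    filter_upwards [eventually_gt_atTop (0:ℝ)] with k hk
    have hkA : k ^ (lam / ν) ≠ 0 := (Real.rpow_pos_of_pos hk _).ne'
    rw [Real.rpow_neg hk.le]
    field_simp
  -- ## Setup
  haveI := aux_nontrivial hd
  have h0R : (0 : EuclideanSpace ℝ (Fin d)) ∈ R := interior_subset h0
  have hfR : ∀ x ∈ R, 0 ≤ f x := by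
    intro x hx
    rcases eq_or_ne x 0 with rfl | hne
    · simp [hmin]
    · exact (hpos x hx hne).le
  haveI : Nonempty (Metric.sphere (0 : EuclideanSpace ℝ (Fin d)) 1) :=
    ((NormedSpace.sphere_nonempty (x := (0 : EuclideanSpace ℝ (Fin d))) (r := 1)).mpr
      zero_le_one).to_subtype
  obtain ⟨Ω₀, -, hΩ₀⟩ := isCompact_univ.exists_isMinOn univ_nonempty hf₀c.continuousOn
  set m := f₀ Ω₀ with hmdef
  have hm : 0 < m := hf₀pos Ω₀
  have hmle : ∀ Ω, m ≤ f₀ Ω := fun Ω => hΩ₀ (mem_univ Ω)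
  obtain ⟨δf, hδf, Hf⟩ := hfexp (m / 2) (half_pos hm)
  obtain ⟨δg, hδg, Hg⟩ := hgexp 1 one_pos
  obtain ⟨δ₀, hδ₀, hball₀⟩ := Metric.mem_nhds_iff.mp (mem_interior_iff_mem_nhds.mp h0)
  set δ := min δ₀ (min δf δg) with hδdef
  have hδ : 0 < δ := lt_min hδ₀ (lt_min hδf hδg)
  have hδ_f : δ ≤ δf := le_trans (min_le_right _ _) (min_le_left _ _)
  have hδ_g : δ ≤ δg := le_trans (min_le_right _ _) (min_le_right _ _)
  have hballR : Metric.ball (0 : EuclideanSpace ℝ (Fin d)) δ ⊆ R :=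
    (Metric.ball_subset_ball (min_le_left _ _)).trans hball₀
  have hflow : ∀ ρ : ℝ, 0 < ρ → ρ < δ → ∀ Ω : Metric.sphere (0 : EuclideanSpace ℝ (Fin d)) 1,
      m / 2 * ρ ^ ν ≤ f (ρ • (Ω : EuclideanSpace ℝ (Fin d))) := by
    intro ρ h1 h2 Ω
    have h3 := abs_le.mp (Hf ρ h1 (h2.trans_le hδ_f) Ω)
    have h4 : 0 < ρ ^ ν := Real.rpow_pos_of_pos h1 ν
    nlinarith [hmle Ω]
  have hgbd : ∀ ρ : ℝ, 0 < ρ → ρ < δ → ∀ Ω : Metric.sphere (0 : EuclideanSpace ℝ (Fin d)) 1,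
      |g (ρ • (Ω : EuclideanSpace ℝ (Fin d)))| ≤ ρ ^ (lam - d) * (|g₀ Ω| + 1) := by
    intro ρ h1 h2 Ω
    have h3 := Hg ρ h1 (h2.trans_le hδ_g) Ω
    have h4 := abs_sub_abs_le_abs_sub (g (ρ • (Ω : EuclideanSpace ℝ (Fin d))))
      (ρ ^ (lam - d) * g₀ Ω)
    have h5 : |ρ ^ (lam - (d:ℝ)) * g₀ Ω| = ρ ^ (lam - (d:ℝ)) * |g₀ Ω| := by
      rw [abs_mul, abs_of_pos (Real.rpow_pos_of_pos h1 _)]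
    rw [h5] at h4
    rw [mul_add, mul_one]
    linarith
  have hintk : ∀ k : ℝ, k₀ ≤ k → IntegrableOn (fun x => Real.exp (-k * f x) * g x) R := by
    intro k hk
    refine Integrable.mono hint ((hfm.const_mul (-k)).exp.mul hgm).aestronglyMeasurable ?_
    refine (ae_restrict_iff' hR).mpr (Eventually.of_forall fun x hx => ?_)
    simp only [norm_mul, Real.norm_eq_abs, Real.abs_exp]
    have hfx := hfR x hx
    have hle : -k * f x ≤ -k₀ * f x := by nlinarith
    exact mul_le_mul_of_nonneg_right (Real.exp_le_exp.mpr hle) (abs_nonneg _)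
  have hsplit : ∀ k : ℝ, k₀ ≤ k →
      (∫ x in R, Real.exp (-k * f x) * g x)
        = (∫ x in Metric.ball (0 : EuclideanSpace ℝ (Fin d)) δ, Real.exp (-k * f x) * g x)
          + ∫ x in R \ Metric.ball (0 : EuclideanSpace ℝ (Fin d)) δ, Real.exp (-k * f x) * g x := by
    intro k hk
    rw [← setIntegral_union disjoint_sdiff_right (hR.diff measurableSet_ball)
      ((hintk k hk).mono_set hballR) ((hintk k hk).mono_set diff_subset),
      union_diff_cancel hballR]
  -- ## Main objects
  set P := μS.prod ((volume : Measure ℝ).restrict (Ioi (0:ℝ))) with hPdef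
  set B : Metric.sphere (0 : EuclideanSpace ℝ (Fin d)) 1 × ℝ → ℝ :=
    fun p => (|g₀ p.1| + 1) * (p.2 ^ (lam - 1) * Real.exp (-(m / 2) * p.2 ^ ν)) with hBdef
  set Glim : Metric.sphere (0 : EuclideanSpace ℝ (Fin d)) 1 × ℝ → ℝ :=
    fun p => p.2 ^ (lam - 1) * (g₀ p.1 * Real.exp (-(f₀ p.1) * p.2 ^ ν)) with hGlimdef
  set φ : ℝ → EuclideanSpace ℝ (Fin d) → ℝ :=
    fun k => (Metric.ball (0 : EuclideanSpace ℝ (Fin d)) δ).indicator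
      (fun x => Real.exp (-k * f x) * g x) with hφdef
  set G : ℝ → Metric.sphere (0 : EuclideanSpace ℝ (Fin d)) 1 × ℝ → ℝ :=
    fun k p => k ^ ((lam - d) / ν) * p.2 ^ (d - 1) *
      φ k ((k ^ (-ν⁻¹) * p.2) • (p.1 : EuclideanSpace ℝ (Fin d))) with hGdef
  have hIe : ∀ k s e : ℝ, 0 < k → 0 < s →
      k ^ (e / ν) * (k ^ (-ν⁻¹) * s) ^ e = s ^ e := by
    intro k s e hk hs
    rw [Real.mul_rpow (Real.rpow_nonneg hk.le _) hs.le, ← Real.rpow_mul hk.le,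
      ← mul_assoc, ← Real.rpow_add hk]
    have he : e / ν + -ν⁻¹ * e = 0 := by field_simp; ring
    rw [he, Real.rpow_zero, one_mul]
  have hI2 : ∀ k s : ℝ, 0 < k → 0 < s → k * (k ^ (-ν⁻¹) * s) ^ ν = s ^ ν := by
    intro k s hk hs
    have := hIe k s ν hk hs
    rwa [div_self hν.ne', Real.rpow_one] at this
  have hI3 : ∀ s : ℝ, 0 < s → s ^ (d - 1) * s ^ (lam - (d:ℝ)) = s ^ (lam - 1) := by
    intro s hs
    rw [← Real.rpow_natCast s (d - 1), ← Real.rpow_add hs]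
    congr 1
    rw [Nat.cast_sub hd]
    push_cast
    ring
  have hmemball : ∀ (ρ : ℝ) (Ω : Metric.sphere (0 : EuclideanSpace ℝ (Fin d)) 1), 0 < ρ →
      (ρ • (Ω : EuclideanSpace ℝ (Fin d)) ∈ Metric.ball (0 : EuclideanSpace ℝ (Fin d)) δ ↔ ρ < δ) := by
    intro ρ Ω hρ
    rw [mem_ball_zero_iff, norm_smul, Real.norm_eq_abs, abs_of_pos hρ,
      mem_sphere_zero_iff_norm.mp Ω.2, mul_one]
  have hPae : ∀ᵐ p ∂P, 0 < p.2 := by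
    have hempty : Iic (0:ℝ) ∩ Ioi 0 = ∅ := by
      ext x; simp only [mem_inter_iff, mem_Iic, mem_Ioi, mem_empty_iff_false, iff_false,
        not_and, not_lt]
      intro h; exact h
    have hnull : P (univ ×ˢ Iic (0:ℝ)) = 0 := by
      rw [hPdef, Measure.prod_prod]
      have h2 : (volume : Measure ℝ).restrict (Ioi 0) (Iic 0) = 0 := by
        rw [Measure.restrict_apply measurableSet_Iic, hempty, measure_empty]
      rw [h2, mul_zero]
    refine ae_iff.mpr (measure_mono_null ?_ hnull)
    intro p hp
    simp only [mem_setOf_eq, not_lt] at hp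
    exact ⟨mem_univ _, hp⟩
  have hGmeas : ∀ k : ℝ, AEStronglyMeasurable (G k) P := by
    intro k
    have hφm : Measurable (φ k) :=
      ((hfm.const_mul (-k)).exp.mul hgm).indicator measurableSet_ball
    have hsm : Measurable fun p : Metric.sphere (0 : EuclideanSpace ℝ (Fin d)) 1 × ℝ =>
        (k ^ (-ν⁻¹) * p.2) • (p.1 : EuclideanSpace ℝ (Fin d)) :=
      ((continuous_const.mul continuous_snd).smul
        (continuous_subtype_val.comp continuous_fst)).measurable
    exact ((measurable_const.mul (measurable_snd.pow_const (d - 1))).mul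
      (hφm.comp hsm)).aestronglyMeasurable
  have hGbd : ∀ k : ℝ, 0 < k → ∀ᵐ p ∂P, ‖G k p‖ ≤ B p := by
    intro k hk
    filter_upwards [hPae] with p hp
    obtain ⟨Ω, s⟩ := p
    simp only at hp
    set r := k ^ (-ν⁻¹) * s with hrdef
    have hr : 0 < r := mul_pos (Real.rpow_pos_of_pos hk _) hp
    by_cases hrδ : r < δ
    · have hmem : r • (Ω : EuclideanSpace ℝ (Fin d)) ∈
          Metric.ball (0 : EuclideanSpace ℝ (Fin d)) δ := (hmemball r Ω hr).mpr hrδ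
      have e1 : Real.exp (-k * f (r • (Ω : EuclideanSpace ℝ (Fin d))))
          ≤ Real.exp (-(m / 2) * s ^ ν) := by
        rw [Real.exp_le_exp]
        have h5 := hflow r hr hrδ Ω
        have h6 := mul_le_mul_of_nonneg_left h5 hk.le
        have h7 : k * r ^ ν = s ^ ν := hI2 k s hk hp
        nlinarith
      have e2 := hgbd r hr hrδ Ω
      have e3 : k ^ ((lam - ↑d) / ν) * r ^ (lam - ↑d) = s ^ (lam - ↑d) := hIe k s _ hk hp
      simp only [hGdef, hBdef, hφdef, ← hrdef, indicator_of_mem hmem]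
      rw [norm_mul, norm_mul, Real.norm_eq_abs, Real.norm_eq_abs, Real.norm_eq_abs,
        abs_mul, Real.abs_exp, abs_of_pos (Real.rpow_pos_of_pos hk _),
        abs_of_pos (pow_pos hp _)]
      calc k ^ ((lam - ↑d) / ν) * s ^ (d - 1) *
            (Real.exp (-k * f (r • (Ω : EuclideanSpace ℝ (Fin d)))) *
              |g (r • (Ω : EuclideanSpace ℝ (Fin d)))|)
          ≤ k ^ ((lam - ↑d) / ν) * s ^ (d - 1) *
            (Real.exp (-(m / 2) * s ^ ν) * (r ^ (lam - ↑d) * (|g₀ Ω| + 1))) := by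
            gcongr
        _ = (|g₀ Ω| + 1) * (s ^ (lam - 1) * Real.exp (-(m / 2) * s ^ ν)) := by
            rw [← hI3 s hp, ← e3]; ring
    · have hmem : r • (Ω : EuclideanSpace ℝ (Fin d)) ∉
          Metric.ball (0 : EuclideanSpace ℝ (Fin d)) δ := fun h => hrδ ((hmemball r Ω hr).mp h)
      simp only [hGdef, hBdef, hφdef, ← hrdef, indicator_of_notMem hmem, mul_zero, norm_zero]
      have : (0:ℝ) ≤ s ^ (lam - 1) * Real.exp (-(m / 2) * s ^ ν) :=
        mul_nonneg (Real.rpow_nonneg hp.le _) (Real.exp_pos _).le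
      positivity
  have hBint : Integrable B P := by
    have h1 : Integrable (fun Ω => |g₀ Ω| + 1) μS := hg₀.abs.add (integrable_const 1)
    have h2 : Integrable (fun s : ℝ => s ^ (lam - 1) * Real.exp (-(m / 2) * s ^ ν))
        ((volume : Measure ℝ).restrict (Ioi 0)) :=
      aux_integrable_rpow_exp hν (by linarith) (half_pos hm)
    exact h1.mul_prod h2
  have hGlim_ae : ∀ᵐ p ∂P, Tendsto (fun k => G k p) atTop (𝓝 (Glim p)) := by
    filter_upwards [hPae] with p hp
    obtain ⟨Ω, s⟩ := p
    simp only at hp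
    have hrk : Tendsto (fun k : ℝ => k ^ (-ν⁻¹) * s) atTop (𝓝[>] 0) := by
      rw [tendsto_nhdsWithin_iff]
      constructor
      · have h1 := (tendsto_rpow_neg_atTop (inv_pos.mpr hν)).mul_const s
        rw [zero_mul] at h1
        exact h1
      · filter_upwards [eventually_gt_atTop (0:ℝ)] with k hk
        exact mul_pos (Real.rpow_pos_of_pos hk _) hp
    have hu : Tendsto (fun ρ : ℝ => ρ ^ (-(lam - ↑d)) * g (ρ • (Ω : EuclideanSpace ℝ (Fin d))))
        (𝓝[>] 0) (𝓝 (g₀ Ω)) := by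
      rw [Metric.tendsto_nhdsWithin_nhds]
      intro ε hε
      obtain ⟨δ', hδ', H'⟩ := hgexp (ε / 2) (half_pos hε)
      refine ⟨δ', hδ', fun {ρ} hρ hd' => ?_⟩
      have hρ0 : (0:ℝ) < ρ := hρ
      have hρδ : ρ < δ' := by rwa [Real.dist_eq, sub_zero, abs_of_pos hρ0] at hd'
      have h1 := H' ρ hρ0 hρδ Ω
      rw [Real.dist_eq]
      have h2 : ρ ^ (-(lam - ↑d)) * g (ρ • (Ω : EuclideanSpace ℝ (Fin d))) - g₀ Ω
          = ρ ^ (-(lam - ↑d)) *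
            (g (ρ • (Ω : EuclideanSpace ℝ (Fin d))) - ρ ^ (lam - ↑d) * g₀ Ω) := by
        rw [mul_sub, ← mul_assoc, ← Real.rpow_add hρ0, neg_add_cancel, Real.rpow_zero, one_mul]
      rw [h2, abs_mul, abs_of_pos (Real.rpow_pos_of_pos hρ0 _)]
      calc ρ ^ (-(lam - ↑d)) * |g (ρ • (Ω : EuclideanSpace ℝ (Fin d))) - ρ ^ (lam - ↑d) * g₀ Ω|
          ≤ ρ ^ (-(lam - ↑d)) * (ε / 2 * ρ ^ (lam - ↑d)) :=
            mul_le_mul_of_nonneg_left h1 (Real.rpow_nonneg hρ0.le _)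
        _ = ε / 2 := by
            rw [mul_comm (ε / 2), ← mul_assoc, ← Real.rpow_add hρ0, neg_add_cancel,
              Real.rpow_zero, one_mul]
        _ < ε := half_lt_self hε
    have hv : Tendsto (fun ρ : ℝ => ρ ^ (-ν) * f (ρ • (Ω : EuclideanSpace ℝ (Fin d))))
        (𝓝[>] 0) (𝓝 (f₀ Ω)) := by
      rw [Metric.tendsto_nhdsWithin_nhds]
      intro ε hε
      obtain ⟨δ', hδ', H'⟩ := hfexp (ε / 2) (half_pos hε)
      refine ⟨δ', hδ', fun {ρ} hρ hd' => ?_⟩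
      have hρ0 : (0:ℝ) < ρ := hρ
      have hρδ : ρ < δ' := by rwa [Real.dist_eq, sub_zero, abs_of_pos hρ0] at hd'
      have h1 := H' ρ hρ0 hρδ Ω
      rw [Real.dist_eq]
      have h2 : ρ ^ (-ν) * f (ρ • (Ω : EuclideanSpace ℝ (Fin d))) - f₀ Ω
          = ρ ^ (-ν) * (f (ρ • (Ω : EuclideanSpace ℝ (Fin d))) - ρ ^ ν * f₀ Ω) := by
        rw [mul_sub, ← mul_assoc, ← Real.rpow_add hρ0, neg_add_cancel, Real.rpow_zero, one_mul]
      rw [h2, abs_mul, abs_of_pos (Real.rpow_pos_of_pos hρ0 _)]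
      calc ρ ^ (-ν) * |f (ρ • (Ω : EuclideanSpace ℝ (Fin d))) - ρ ^ ν * f₀ Ω|
          ≤ ρ ^ (-ν) * (ε / 2 * ρ ^ ν) :=
            mul_le_mul_of_nonneg_left h1 (Real.rpow_nonneg hρ0.le _)
        _ = ε / 2 := by
            rw [mul_comm (ε / 2), ← mul_assoc, ← Real.rpow_add hρ0, neg_add_cancel,
              Real.rpow_zero, one_mul]
        _ < ε := half_lt_self hε
    have hU := hu.comp hrk
    have hV := hv.comp hrk
    have hexp : Tendsto (fun k : ℝ => Real.exp (-(s ^ ν) *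
        ((k ^ (-ν⁻¹) * s) ^ (-ν) * f ((k ^ (-ν⁻¹) * s) • (Ω : EuclideanSpace ℝ (Fin d))))))
        atTop (𝓝 (Real.exp (-(s ^ ν) * f₀ Ω))) := (hV.const_mul (-(s ^ ν))).rexp
    have hT : Tendsto (fun k : ℝ => (s ^ (d - 1) * s ^ (lam - ↑d)) *
        ((k ^ (-ν⁻¹) * s) ^ (-(lam - ↑d)) * g ((k ^ (-ν⁻¹) * s) • (Ω : EuclideanSpace ℝ (Fin d)))) *
        Real.exp (-(s ^ ν) *
          ((k ^ (-ν⁻¹) * s) ^ (-ν) * f ((k ^ (-ν⁻¹) * s) • (Ω : EuclideanSpace ℝ (Fin d))))))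
        atTop (𝓝 ((s ^ (d - 1) * s ^ (lam - ↑d)) * g₀ Ω * Real.exp (-(s ^ ν) * f₀ Ω))) :=
      (hU.const_mul _).mul hexp
    have hlimval : (s ^ (d - 1) * s ^ (lam - ↑d)) * g₀ Ω * Real.exp (-(s ^ ν) * f₀ Ω)
        = Glim (Ω, s) := by
      simp only [hGlimdef]
      rw [hI3 s hp, show -(s ^ ν) * f₀ Ω = -(f₀ Ω) * s ^ ν from by ring]
      ring
    rw [← hlimval]
    refine Tendsto.congr' ?_ hT
    have hevδ : ∀ᶠ k : ℝ in atTop, k ^ (-ν⁻¹) * s < δ := by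
      have h1 := (tendsto_nhdsWithin_iff.mp hrk).1
      exact h1.eventually_lt_const hδ
    filter_upwards [hevδ, eventually_gt_atTop (0:ℝ)] with k hkδ hk0
    have hr : 0 < k ^ (-ν⁻¹) * s := mul_pos (Real.rpow_pos_of_pos hk0 _) hp
    have hmem : (k ^ (-ν⁻¹) * s) • (Ω : EuclideanSpace ℝ (Fin d)) ∈
        Metric.ball (0 : EuclideanSpace ℝ (Fin d)) δ := (hmemball _ Ω hr).mpr hkδ
    simp only [hGdef, hφdef, indicator_of_mem hmem]
    rw [Real.rpow_neg hr.le ν, Real.rpow_neg hr.le (lam - ↑d)]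
    have hk' : s ^ ν * ((k ^ (-ν⁻¹) * s) ^ ν)⁻¹ = k := by
      rw [← hI2 k s hk0 hp, mul_assoc,
        mul_inv_cancel₀ (Real.rpow_pos_of_pos hr _).ne', mul_one]
    have hs' : s ^ (lam - ↑d) * ((k ^ (-ν⁻¹) * s) ^ (lam - ↑d))⁻¹ = k ^ ((lam - ↑d) / ν) := by
      rw [← hIe k s (lam - ↑d) hk0 hp, mul_assoc,
        mul_inv_cancel₀ (Real.rpow_pos_of_pos hr _).ne', mul_one]
    rw [show -(s ^ ν) * (((k ^ (-ν⁻¹) * s) ^ ν)⁻¹ *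
        f ((k ^ (-ν⁻¹) * s) • (Ω : EuclideanSpace ℝ (Fin d))))
        = -(s ^ ν * ((k ^ (-ν⁻¹) * s) ^ ν)⁻¹) *
          f ((k ^ (-ν⁻¹) * s) • (Ω : EuclideanSpace ℝ (Fin d))) from by ring, hk']
    rw [← hs']
    ring
  have hGint : ∀ k : ℝ, 0 < k → Integrable (G k) P :=
    fun k hk => hBint.mono' (hGmeas k) (hGbd k hk)
  have hC1 : ∀ k : ℝ, k₀ ≤ k → 0 < k →
      k ^ (lam / ν) * (∫ x in Metric.ball (0 : EuclideanSpace ℝ (Fin d)) δ,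
        Real.exp (-k * f x) * g x) = ∫ p, G k p ∂P := by
    intro k hk0 hk
    have hb : (0:ℝ) < k ^ (-ν⁻¹) := Real.rpow_pos_of_pos hk _
    have hφint : Integrable (φ k) (volume : Measure (EuclideanSpace ℝ (Fin d))) := by
      rw [hφdef, integrable_indicator_iff measurableSet_ball]
      exact (hintk k hk0).mono_set hballR
    have s1 : (∫ x in Metric.ball (0 : EuclideanSpace ℝ (Fin d)) δ, Real.exp (-k * f x) * g x)
        = ∫ x, φ k x := by
      rw [hφdef, integral_indicator measurableSet_ball]
    have s2 := aux_polar_eq hd (φ k)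
    have s3 := MeasureTheory.integral_prod
      (fun p : Metric.sphere (0 : EuclideanSpace ℝ (Fin d)) 1 × Ioi (0:ℝ) =>
        φ k ((p.2 : ℝ) • (p.1 : EuclideanSpace ℝ (Fin d))))
      (aux_polar_integrable hd (φ k) hφint)
    have s4 : ∀ Ω : Metric.sphere (0 : EuclideanSpace ℝ (Fin d)) 1,
        (∫ y : Ioi (0:ℝ), φ k ((y : ℝ) • (Ω : EuclideanSpace ℝ (Fin d)))
          ∂(Measure.volumeIoiPow (d - 1)))
        = ∫ r in Ioi (0:ℝ), r ^ (d - 1) * φ k (r • (Ω : EuclideanSpace ℝ (Fin d))) :=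
      fun Ω => aux_integral_volumeIoiPow (d - 1)
        (fun r => φ k (r • (Ω : EuclideanSpace ℝ (Fin d))))
    have s5 : ∀ Ω : Metric.sphere (0 : EuclideanSpace ℝ (Fin d)) 1,
        k ^ (lam / ν) * ∫ r in Ioi (0:ℝ), r ^ (d - 1) * φ k (r • (Ω : EuclideanSpace ℝ (Fin d)))
        = ∫ s in Ioi (0:ℝ), G k (Ω, s) := by
      intro Ω
      have hcomp := integral_comp_mul_left_Ioi
        (fun r => r ^ (d - 1) * φ k (r • (Ω : EuclideanSpace ℝ (Fin d)))) 0 hb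
      rw [mul_zero, smul_eq_mul] at hcomp
      have h8 : (∫ r in Ioi (0:ℝ), r ^ (d - 1) * φ k (r • (Ω : EuclideanSpace ℝ (Fin d))))
          = k ^ (-ν⁻¹) * ∫ x in Ioi (0:ℝ), (k ^ (-ν⁻¹) * x) ^ (d - 1) *
              φ k ((k ^ (-ν⁻¹) * x) • (Ω : EuclideanSpace ℝ (Fin d))) := by
        rw [hcomp, ← mul_assoc, mul_inv_cancel₀ hb.ne', one_mul]
      rw [h8, ← mul_assoc, ← integral_const_mul]
      refine setIntegral_congr_fun measurableSet_Ioi fun s hs => ?_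
      have hs0 : (0:ℝ) < s := hs
      simp only [hGdef]
      rw [mul_pow]
      have hpow : k ^ (lam / ν) * k ^ (-ν⁻¹) * (k ^ (-ν⁻¹)) ^ (d - 1)
          = k ^ ((lam - ↑d) / ν) := by
        rw [← Real.rpow_natCast (k ^ (-ν⁻¹)) (d - 1), ← Real.rpow_mul hk.le,
          ← Real.rpow_add hk, ← Real.rpow_add hk]
        congr 1
        rw [Nat.cast_sub hd]
        push_cast
        field_simp
        ring
      rw [← hpow]
      ring
    have s6 := MeasureTheory.integral_prod (fun p => G k p) (hGint k hk)
    rw [s1, s2, s3, s6]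
    rw [← integral_const_mul]
    refine integral_congr_ae (Eventually.of_forall fun Ω => ?_)
    simp only
    rw [s4 Ω, s5 Ω]
  have hGlimint : Integrable Glim P := by
    have hmeas : AEStronglyMeasurable Glim P := by
      have ha : AEStronglyMeasurable
          (fun p : Metric.sphere (0 : EuclideanSpace ℝ (Fin d)) 1 × ℝ => p.2 ^ (lam - 1)) P := by
        refine AEStronglyMeasurable.congr
          (f := fun p : Metric.sphere (0 : EuclideanSpace ℝ (Fin d)) 1 × ℝ =>
            Real.exp (Real.log p.2 * (lam - 1)))
          (((Real.measurable_log.comp measurable_snd).mul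
            measurable_const).exp.aestronglyMeasurable) ?_
        filter_upwards [hPae] with p hp
        rw [← Real.rpow_def_of_pos hp]
      have hc : AEStronglyMeasurable
          (fun p : Metric.sphere (0 : EuclideanSpace ℝ (Fin d)) 1 × ℝ =>
            Real.exp (-(f₀ p.1) * p.2 ^ ν)) P := by
        refine AEStronglyMeasurable.congr
          (f := fun p : Metric.sphere (0 : EuclideanSpace ℝ (Fin d)) 1 × ℝ =>
            Real.exp (-(f₀ p.1) * Real.exp (Real.log p.2 * ν)))
          (((((hf₀c.comp continuous_fst).measurable).neg).mul
            ((Real.measurable_log.comp measurable_snd).mul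
              measurable_const).exp).exp.aestronglyMeasurable) ?_
        filter_upwards [hPae] with p hp
        rw [← Real.rpow_def_of_pos hp]
      have hb : AEStronglyMeasurable
          (fun p : Metric.sphere (0 : EuclideanSpace ℝ (Fin d)) 1 × ℝ => g₀ p.1) P := hg₀.1.comp_fst
      exact ha.mul (hb.mul hc)
    refine hBint.mono' hmeas ?_
    filter_upwards [hPae] with p hp
    obtain ⟨Ω, s⟩ := p
    simp only at hp
    have h1 : Real.exp (-(f₀ Ω) * s ^ ν) ≤ Real.exp (-(m / 2) * s ^ ν) := by
      rw [Real.exp_le_exp]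
      nlinarith [Real.rpow_nonneg hp.le ν, hmle Ω]
    simp only [hGlimdef, hBdef]
    rw [norm_mul, norm_mul, Real.norm_eq_abs, Real.norm_eq_abs, Real.norm_eq_abs,
      abs_of_pos (Real.rpow_pos_of_pos hp _), Real.abs_exp]
    calc s ^ (lam - 1) * (|g₀ Ω| * Real.exp (-(f₀ Ω) * s ^ ν))
        ≤ s ^ (lam - 1) * ((|g₀ Ω| + 1) * Real.exp (-(m / 2) * s ^ ν)) := by
          gcongr
          · exact le_add_of_nonneg_right zero_le_one
      _ = (|g₀ Ω| + 1) * (s ^ (lam - 1) * Real.exp (-(m / 2) * s ^ ν)) := by ring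
  have hC6 : ∫ p, Glim p ∂P = Z := by
    rw [MeasureTheory.integral_prod _ hGlimint]
    have hinner : ∀ Ω : Metric.sphere (0 : EuclideanSpace ℝ (Fin d)) 1,
        (∫ s in Ioi (0:ℝ), Glim (Ω, s))
          = (1 / ν * Real.Gamma (lam / ν)) * (g₀ Ω * (f₀ Ω) ^ (-(lam / ν))) := by
      intro Ω
      have h1 : ∀ s : ℝ, Glim (Ω, s)
          = g₀ Ω * (s ^ (lam - 1) * Real.exp (-(f₀ Ω) * s ^ ν)) := by
        intro s; simp only [hGlimdef]; ring
      simp_rw [h1, integral_const_mul]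
      rw [integral_rpow_mul_exp_neg_mul_rpow hν (by linarith) (hf₀pos Ω)]
      rw [show lam - 1 + 1 = lam from by ring, show -lam / ν = -(lam / ν) from by ring]
      ring
    calc ∫ Ω, (∫ s in Ioi (0:ℝ), Glim (Ω, s)) ∂μS
        = ∫ Ω, (1 / ν * Real.Gamma (lam / ν)) * (g₀ Ω * (f₀ Ω) ^ (-(lam / ν))) ∂μS :=
          integral_congr_ae (Eventually.of_forall fun Ω => hinner Ω)
      _ = Z := by rw [integral_const_mul, hZdef, mul_assoc]
  have hDCT : Tendsto (fun k : ℝ => ∫ p, G k p ∂P) atTop (𝓝 (∫ p, Glim p ∂P)) := by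
    refine tendsto_integral_filter_of_dominated_convergence B (Eventually.of_forall hGmeas)
      ?_ hBint hGlim_ae
    filter_upwards [eventually_gt_atTop (0:ℝ)] with k hk
    exact hGbd k hk
  have hball_t : Tendsto (fun k : ℝ => k ^ (lam / ν) *
      ∫ x in Metric.ball (0 : EuclideanSpace ℝ (Fin d)) δ, Real.exp (-k * f x) * g x)
      atTop (𝓝 Z) := by
    rw [← hC6]
    refine hDCT.congr' ?_
    filter_upwards [eventually_ge_atTop k₀, eventually_gt_atTop (0:ℝ)] with k hk1 hk2
    exact (hC1 k hk1 hk2).symm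
  have htail_t : Tendsto (fun k : ℝ => k ^ (lam / ν) *
      ∫ x in R \ Metric.ball (0 : EuclideanSpace ℝ (Fin d)) δ, Real.exp (-k * f x) * g x)
      atTop (𝓝 0) := by
    obtain ⟨c, hc, hcf⟩ := hbdd δ hδ
    set C := ∫ x in R, ‖Real.exp (-k₀ * f x) * g x‖ with hCdef
    have hbound : ∀ k : ℝ, k₀ ≤ k →
        ‖∫ x in R \ Metric.ball (0 : EuclideanSpace ℝ (Fin d)) δ, Real.exp (-k * f x) * g x‖
          ≤ Real.exp (-(k - k₀) * c) * C := by
      intro k hk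
      have hintnorm : IntegrableOn (fun x => ‖Real.exp (-k₀ * f x) * g x‖) R := hint.norm
      have hint₂ : IntegrableOn (fun x => Real.exp (-k * f x) * g x)
          (R \ Metric.ball (0 : EuclideanSpace ℝ (Fin d)) δ) :=
        (hintk k hk).mono_set diff_subset
      calc ‖∫ x in R \ Metric.ball (0 : EuclideanSpace ℝ (Fin d)) δ, Real.exp (-k * f x) * g x‖
          ≤ ∫ x in R \ Metric.ball (0 : EuclideanSpace ℝ (Fin d)) δ,
              ‖Real.exp (-k * f x) * g x‖ := norm_integral_le_integral_norm _
        _ ≤ ∫ x in R \ Metric.ball (0 : EuclideanSpace ℝ (Fin d)) δ,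
              Real.exp (-(k - k₀) * c) * ‖Real.exp (-k₀ * f x) * g x‖ := ?_
        _ = Real.exp (-(k - k₀) * c) * ∫ x in R \ Metric.ball (0 : EuclideanSpace ℝ (Fin d)) δ,
              ‖Real.exp (-k₀ * f x) * g x‖ := integral_const_mul _ _
        _ ≤ Real.exp (-(k - k₀) * c) * C := ?_
      · refine setIntegral_mono_on hint₂.norm
          ((hintnorm.mono_set diff_subset).const_mul _) (hR.diff measurableSet_ball) ?_
        intro x hx
        have hxR : x ∈ R := hx.1
        have hxn : δ ≤ ‖x‖ := by
          have h3 := hx.2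
          simp only [Metric.mem_ball, dist_zero_right, not_lt] at h3
          exact h3
        have hfc := hcf x hxR hxn
        simp only [norm_mul, Real.norm_eq_abs, Real.abs_exp]
        rw [← mul_assoc, ← Real.exp_add]
        have h4 : -k * f x ≤ -(k - k₀) * c + -k₀ * f x := by
          nlinarith [mul_nonneg (sub_nonneg.mpr hk) (sub_nonneg.mpr hfc)]
        exact mul_le_mul_of_nonneg_right (Real.exp_le_exp.mpr h4) (abs_nonneg _)
      · refine mul_le_mul_of_nonneg_left ?_ (Real.exp_pos _).le
        exact setIntegral_mono_set hint.norm
          (Eventually.of_forall fun x => norm_nonneg _)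
          (HasSubset.Subset.eventuallyLE diff_subset)
    have hzero : Tendsto (fun k : ℝ => k ^ (lam / ν) * (Real.exp (-(k - k₀) * c) * C))
        atTop (𝓝 0) := by
      have h2 := (tendsto_rpow_mul_exp_neg_mul_atTop_nhds_zero (lam / ν) c hc).mul_const
        (Real.exp (k₀ * c) * C)
      rw [zero_mul] at h2
      refine h2.congr fun k => ?_
      rw [show -(k - k₀) * c = -c * k + k₀ * c by ring, Real.exp_add]
      ring
    refine squeeze_zero_norm' ?_ hzero
    filter_upwards [eventually_ge_atTop k₀, eventually_gt_atTop (0:ℝ)] with k hk1 hk2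
    rw [norm_mul, Real.norm_eq_abs (k ^ (lam / ν)),
      abs_of_pos (Real.rpow_pos_of_pos hk2 _)]
    exact mul_le_mul_of_nonneg_left (hbound k hk1) (Real.rpow_pos_of_pos hk2 _).le
  have hcomb := hball_t.add htail_t
  rw [add_zero] at hcomb
  refine hcomb.congr' ?_
  filter_upwards [eventually_ge_atTop k₀] with k hk
  rw [← mul_add, ← hsplit k hk]
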